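/- If A is a formally smooth associative k-algebra, then A is hereditary: every left A-module has projective dimension at most 1. -/

import Mathlib

/-!
STATEMENT 12: if `A` is a formally smooth associative `k`-algebra (i.e. the kernel `Ω¹_A`
of the multiplication `A ⊗_k A → A` is projective as an `A`-bimodule, that is, as a
module over `A^e = A ⊗_k Aᵐᵒᵖ`), then `A` is hereditary: every left `A`-module has
projective dimension at most `1`.
-/

open CategoryTheory
open scoped TensorProduct

set_option synthInstance.maxHeartbeats 400000
set_option maxHeartbeats 1000000

/-- `M` has projective dimension `≤ n`. -/
def ProjDimLE (A : Type) [Ring A] (M : ModuleCat.{0} A) (n : ℕ) : Prop :=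
  ∃ P : ProjectiveResolution M, ∀ i : ℕ, n < i → Limits.IsZero (P.complex.X i)

section

variable (k A : Type) [Field k] [Ring A] [Algebra k A]

/-- The bimodule structure on `A`: `A` is a module over `A^e = A ⊗[k] Aᵐᵒᵖ`,
via `(a ⊗ bᵒᵖ) • x = a * x * b`. -/
noncomputable local instance : Module (A ⊗[k] Aᵐᵒᵖ) A := TensorProduct.Algebra.module

/-- The multiplication map `A^e → A`, `a ⊗ bᵒᵖ ↦ a * b`, as a map of `A^e`-modules;
its kernel is `Ω¹_A`. -/
noncomputable def mulMap : (A ⊗[k] Aᵐᵒᵖ) →ₗ[A ⊗[k] Aᵐᵒᵖ] A :=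
  LinearMap.toSpanSingleton _ _ (1 : A)

/-! ### Auxiliary development -/

theorem mulMap_tmul (a : A) (b : Aᵐᵒᵖ) : mulMap k A (a ⊗ₜ[k] b) = a * b.unop := by
  show (a ⊗ₜ[k] b) • (1 : A) = a * b.unop
  rw [TensorProduct.Algebra.smul_def, MulOpposite.smul_eq_mul_unop, smul_eq_mul, one_mul]

variable {k A}

section Aux

local instance smulCommClass_kA (M : Type) [AddCommMonoid M] [Module k M] [Module A M]
    [IsScalarTower k A M] : SMulCommClass k A M :=
  ⟨fun c a m => by
    rw [← algebraMap_smul A c m, ← algebraMap_smul A c (a • m), ← mul_smul, ← mul_smul,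
      Algebra.commutes]⟩

variable (k A) in
/-- `δ a = a ⊗ 1 - 1 ⊗ aᵒᵖ`, an element of `Ω¹ = ker (mulMap)`. -/
noncomputable def deltaMap (a : A) : LinearMap.ker (mulMap k A) :=
  ⟨a ⊗ₜ[k] (1 : Aᵐᵒᵖ) - (1 : A) ⊗ₜ[k] (MulOpposite.op a), by
    simp [LinearMap.mem_ker, map_sub, mulMap_tmul]⟩

theorem deltaMap_add (a b : A) : deltaMap k A (a + b) = deltaMap k A a + deltaMap k A b := by
  apply Subtype.ext
  simp [deltaMap, TensorProduct.add_tmul, TensorProduct.tmul_add]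
  abel

theorem deltaMap_smul (c : k) (a : A) : deltaMap k A (c • a) = c • deltaMap k A a := by
  apply Subtype.ext
  simp [deltaMap, TensorProduct.smul_tmul', TensorProduct.tmul_smul, smul_sub]

/-- Leibniz rule: `δ(ab) = (a ⊗ 1) • δ b + (1 ⊗ bᵒᵖ) • δ a`. -/
theorem deltaMap_mul (a b : A) :
    deltaMap k A (a * b) =
      (a ⊗ₜ[k] (1 : Aᵐᵒᵖ)) • deltaMap k A b
        + ((1 : A) ⊗ₜ[k] MulOpposite.op b) • deltaMap k A a := by
  apply Subtype.ext
  show _ = (a ⊗ₜ[k] (1 : Aᵐᵒᵖ)) * _ + ((1 : A) ⊗ₜ[k] MulOpposite.op b) * _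
  simp only [deltaMap, mul_sub, Algebra.TensorProduct.tmul_mul_tmul, mul_one, one_mul,
    ← MulOpposite.op_mul]
  abel

variable (M : Type) [AddCommGroup M] [Module k M] [Module A M] [IsScalarTower k A M]

local instance kerACG (p : Submodule A (A ⊗[k] M)) : AddCommGroup p := Submodule.addCommGroup p

variable (k) in
/-- Right multiplication `m ↦ b • m` as a `k`-linear endomorphism of an `A`-module. -/
noncomputable def rsmulMap (b : A) : M →ₗ[k] M where
  toFun m := b • m
  map_add' := smul_add b
  map_smul' c m := (smul_comm c b m).symm

@[simp] theorem rsmulMap_apply (b : A) (m : M) : rsmulMap k M b m = b • m := rfl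

variable (k A) in
/-- The action map `A ⊗[k] M →ₗ[A] M`. -/
noncomputable def epsMap : (A ⊗[k] M) →ₗ[A] M where
  toFun := TensorProduct.lift (LinearMap.mk₂ k (fun (a : A) (m : M) => a • m)
    (fun a b m => add_smul a b m) (fun c a m => smul_assoc c a m)
    (fun a m n => smul_add a m n) (fun c a m => (smul_comm c a m).symm))
  map_add' := map_add _
  map_smul' a x := by
    induction x using TensorProduct.induction_on with
    | zero => simp
    | tmul b m =>
      simp only [TensorProduct.smul_tmul', TensorProduct.lift.tmul, LinearMap.mk₂_apply,
        smul_eq_mul, mul_smul, RingHom.id_apply]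
    | add u v hu hv => simp only [smul_add, map_add, hu, hv]

@[simp] theorem epsMap_tmul (a : A) (m : M) : epsMap k A M (a ⊗ₜ[k] m) = a • m := by
  show TensorProduct.lift _ _ = _
  simp

theorem epsMap_surjective : Function.Surjective (epsMap k A M) :=
  fun m => ⟨(1 : A) ⊗ₜ[k] m, by simp⟩

variable (k A) in
/-- `ν : A ⊗ Aᵐᵒᵖ →ₗ[k] Hom_k(M, A ⊗ M)`, `x ⊗ yᵒᵖ ↦ (m ↦ x ⊗ (y • m))`. -/
noncomputable def nuMap : (A ⊗[k] Aᵐᵒᵖ) →ₗ[k] (M →ₗ[k] (A ⊗[k] M)) :=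
  TensorProduct.lift (LinearMap.mk₂ k
    (fun (a : A) (b : Aᵐᵒᵖ) => (TensorProduct.mk k A M a).comp (rsmulMap k M b.unop))
    (fun a b y => by ext m; simp [TensorProduct.add_tmul])
    (fun c a y => by ext m; simp [TensorProduct.smul_tmul'])
    (fun a y y' => by ext m; simp [MulOpposite.unop_add, add_smul, TensorProduct.tmul_add])
    (fun c a y => by
      ext m
      simp [MulOpposite.unop_smul, TensorProduct.tmul_smul, smul_assoc]))

@[simp] theorem nuMap_tmul (a : A) (b : Aᵐᵒᵖ) (m : M) :
    nuMap k A M (a ⊗ₜ[k] b) m = a ⊗ₜ[k] (b.unop • m) := by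
  simp [nuMap]

theorem epsMap_nuMap (w : A ⊗[k] Aᵐᵒᵖ) (m : M) :
    epsMap k A M (nuMap k A M w m) = (mulMap k A w) • m := by
  induction w using TensorProduct.induction_on with
  | zero => simp
  | tmul a b => simp [mulMap_tmul, mul_smul]
  | add u v hu hv => simp [map_add, add_smul, hu, hv]


noncomputable def opSMul (E : Type) [AddCommGroup E] [Module k E] :
    SMul Aᵐᵒᵖ (M →ₗ[k] E) :=
  ⟨fun b φ => φ.comp (rsmulMap k M b.unop)⟩

attribute [local instance] opSMul
attribute [reducible] opSMul

theorem opSmul_apply {E : Type} [AddCommGroup E] [Module k E] (b : Aᵐᵒᵖ) (φ : M →ₗ[k] E)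
    (m : M) : (b • φ) m = φ (b.unop • m) := rfl

noncomputable def opModule (E : Type) [AddCommGroup E] [Module k E] :
    Module Aᵐᵒᵖ (M →ₗ[k] E) where
  one_smul φ := by ext m; rw [opSmul_apply]; simp
  mul_smul x y φ := by
    ext m
    simp only [opSmul_apply, MulOpposite.unop_mul, mul_smul]
  smul_zero b := by ext m; rfl
  smul_add b φ ψ := by ext m; rfl
  add_smul b c φ := by
    ext m
    simp only [opSmul_apply, MulOpposite.unop_add, add_smul, map_add, LinearMap.add_apply]
  zero_smul φ := by
    ext m
    simp only [opSmul_apply, MulOpposite.unop_zero, zero_smul, map_zero, LinearMap.zero_apply]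

attribute [local instance] opModule
attribute [reducible] opModule

noncomputable def opTower (E : Type) [AddCommGroup E] [Module k E] :
    IsScalarTower k Aᵐᵒᵖ (M →ₗ[k] E) :=
  ⟨fun c b φ => by
    ext m
    simp only [LinearMap.smul_apply, opSmul_apply, MulOpposite.unop_smul, smul_assoc, map_smul]⟩

attribute [local instance] opTower
attribute [reducible] opTower

noncomputable def opComm (E : Type) [AddCommGroup E] [Module k E] [Module A E]
    [IsScalarTower k A E] : SMulCommClass A Aᵐᵒᵖ (M →ₗ[k] E) :=
  ⟨fun a b φ => by ext m; rfl⟩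

attribute [local instance] opComm
attribute [reducible] opComm

noncomputable def homAeModule (E : Type) [AddCommGroup E] [Module k E] [Module A E]
    [IsScalarTower k A E] : Module (A ⊗[k] Aᵐᵒᵖ) (M →ₗ[k] E) :=
  TensorProduct.Algebra.module

attribute [local instance] homAeModule
attribute [reducible] homAeModule

theorem homAe_smul_apply {E : Type} [AddCommGroup E] [Module k E] [Module A E]
    [IsScalarTower k A E] (a : A) (b : Aᵐᵒᵖ) (φ : M →ₗ[k] E) (m : M) :
    ((a ⊗ₜ[k] b) • φ) m = a • φ (b.unop • m) := by
  rw [TensorProduct.Algebra.smul_def]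
  rfl


noncomputable def homAeTower (E : Type) [AddCommGroup E] [Module k E] [Module A E]
    [IsScalarTower k A E] : IsScalarTower k (A ⊗[k] Aᵐᵒᵖ) (M →ₗ[k] E) :=
  ⟨fun c w φ => by
    induction w using TensorProduct.induction_on with
    | zero => rw [smul_zero, zero_smul (A ⊗[k] Aᵐᵒᵖ) φ, smul_zero]
    | tmul a b =>
      ext m
      rw [TensorProduct.smul_tmul']
      rw [homAe_smul_apply, LinearMap.smul_apply, homAe_smul_apply, smul_assoc]
    | add u v hu hv => rw [smul_add, add_smul, add_smul, smul_add, hu, hv]⟩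

attribute [local instance] homAeTower
attribute [reducible] homAeTower

/-- Upgrade an additive map commuting with pure-tensor scalars to an `A^e`-linear map. -/
noncomputable def aeLinear {X Y : Type} [AddCommGroup X] [AddCommGroup Y]
    [Module (A ⊗[k] Aᵐᵒᵖ) X] [Module (A ⊗[k] Aᵐᵒᵖ) Y] (f : X →+ Y)
    (hf : ∀ (a : A) (b : Aᵐᵒᵖ) (x : X), f ((a ⊗ₜ[k] b) • x) = (a ⊗ₜ[k] b) • f x) :
    X →ₗ[A ⊗[k] Aᵐᵒᵖ] Y where
  toFun := f
  map_add' := f.map_add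
  map_smul' c x := by
    simp only [RingHom.id_apply]
    induction c using TensorProduct.induction_on with
    | zero => exact (congrArg f (zero_smul (A ⊗[k] Aᵐᵒᵖ) x)).trans (f.map_zero.trans (zero_smul (A ⊗[k] Aᵐᵒᵖ) (f x)).symm)
    | tmul a b => exact hf a b x
    | add u v hu hv => rw [add_smul, add_smul, f.map_add, hu, hv]

@[simp] theorem aeLinear_apply {X Y : Type} [AddCommGroup X] [AddCommGroup Y]
    [Module (A ⊗[k] Aᵐᵒᵖ) X] [Module (A ⊗[k] Aᵐᵒᵖ) Y] (f : X →+ Y)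
    (hf : ∀ (a : A) (b : Aᵐᵒᵖ) (x : X), f ((a ⊗ₜ[k] b) • x) = (a ⊗ₜ[k] b) • f x) (x : X) :
    aeLinear f hf x = f x := rfl


theorem nuMap_mul_smul (a : A) (b : Aᵐᵒᵖ) (w : A ⊗[k] Aᵐᵒᵖ) (m : M) :
    nuMap k A M ((a ⊗ₜ[k] b) * w) m = a • nuMap k A M w (b.unop • m) := by
  induction w using TensorProduct.induction_on with
  | zero => simp
  | tmul u v =>
    simp only [Algebra.TensorProduct.tmul_mul_tmul, nuMap_tmul, MulOpposite.unop_mul, mul_smul,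
      TensorProduct.smul_tmul', smul_eq_mul]
  | add u v hu hv => simp only [mul_add, map_add, LinearMap.add_apply, hu, hv, smul_add]

variable (k A) in
/-- The underlying additive map of `Θ`. -/
noncomputable def thetaAux :
    (LinearMap.ker (mulMap k A)) →+ (M →ₗ[k] (LinearMap.ker (epsMap k A M))) where
  toFun ω :=
    { toFun := fun m => ⟨nuMap k A M ω.1 m, by
        have h0 : mulMap k A ω.1 = 0 := ω.2
        rw [LinearMap.mem_ker, epsMap_nuMap, h0, zero_smul]⟩
      map_add' := fun m n => by apply Subtype.ext; simp
      map_smul' := fun c m => by apply Subtype.ext; simp }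
  map_zero' := by
    ext m
    show nuMap k A M ((0 : LinearMap.ker (mulMap k A)) : A ⊗[k] Aᵐᵒᵖ) m = _
    simp
  map_add' ω ω' := by
    ext m
    show nuMap k A M ((ω + ω' : LinearMap.ker (mulMap k A)) : A ⊗[k] Aᵐᵒᵖ) m = _
    simp

theorem thetaAux_coe (ω : LinearMap.ker (mulMap k A)) (m : M) :
    ((thetaAux k A M ω m : LinearMap.ker (epsMap k A M)) : A ⊗[k] M)
      = nuMap k A M ω.1 m := rfl

variable (k A) in
/-- `Θ : Ω¹ →ₗ[A^e] Hom_k(M, K)`, `ω ↦ (m ↦ ν ω m)`. -/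
noncomputable def thetaMap :
    (LinearMap.ker (mulMap k A)) →ₗ[A ⊗[k] Aᵐᵒᵖ]
      (M →ₗ[k] (LinearMap.ker (epsMap k A M))) :=
  aeLinear (thetaAux k A M)
    (fun a b ω => by
      ext m
      rw [homAe_smul_apply]
      show nuMap k A M ((a ⊗ₜ[k] b) • ω.1) m = _
      rw [smul_eq_mul, nuMap_mul_smul]
      rfl)

theorem thetaMap_coe (ω : LinearMap.ker (mulMap k A)) (m : M) :
    (thetaMap k A M ω m : A ⊗[k] M) = nuMap k A M ω.1 m := rfl

theorem exists_section
    (hΩ : Module.Projective (A ⊗[k] Aᵐᵒᵖ) (LinearMap.ker (mulMap k A)))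
    (E : Type) [AddCommGroup E] [Module k E] [Module A E] [IsScalarTower k A E]
    (g : E →ₗ[A] (LinearMap.ker (epsMap k A M))) (hg : Function.Surjective g) :
    ∃ s : (LinearMap.ker (epsMap k A M)) →ₗ[A] E, g.comp s = LinearMap.id := by
  classical
  let gk : E →ₗ[k] (LinearMap.ker (epsMap k A M)) :=
    { toFun := g
      map_add' := map_add g
      map_smul' := fun c x => by
        show g (c • x) = c • g x
        rw [← algebraMap_smul A c x, map_smul, algebraMap_smul] }
  -- post-composition with `g`, as an `A^e`-linear map
  let ghat : (M →ₗ[k] E) →ₗ[A ⊗[k] Aᵐᵒᵖ] (M →ₗ[k] (LinearMap.ker (epsMap k A M))) :=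
    aeLinear (X := M →ₗ[k] E) (Y := M →ₗ[k] (LinearMap.ker (epsMap k A M)))
      { toFun := fun φ => gk.comp φ
        map_zero' := by ext m; simp [gk]
        map_add' := fun φ ψ => by ext m; simp [gk] }
      (fun a b φ => by
        ext m
        show ((gk (((a ⊗ₜ[k] b) • φ) m) : LinearMap.ker (epsMap k A M)) : A ⊗[k] M) = _
        rw [homAe_smul_apply, homAe_smul_apply]
        exact congrArg _ (g.map_smul a (φ (b.unop • m))))
  have ghat_apply : ∀ (φ : M →ₗ[k] E) (m : M), ghat φ m = gk (φ m) := fun _ _ => rfl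
  -- `ghat` is surjective, using a `k`-linear section of `g`
  have gk_surj : Function.Surjective gk := fun x => by
    obtain ⟨e, he⟩ := hg x
    exact ⟨e, show g e = x from he⟩
  obtain ⟨σ, hσ⟩ := Module.projective_lifting_property gk LinearMap.id gk_surj
  have ghat_surj : Function.Surjective ghat := fun ψ =>
    ⟨σ.comp ψ, by
      ext m
      have h := LinearMap.congr_fun hσ (ψ m)
      simp only [LinearMap.comp_apply, LinearMap.id_apply] at h
      exact congrArg _ h⟩
  -- lift `Θ` through `ghat` using projectivity of `Ω¹`
  obtain ⟨hh, hhh⟩ := Module.projective_lifting_property ghat (thetaMap k A M) ghat_surj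
  -- the would-be section, defined on all of `A ⊗ M`
  let S : (A ⊗[k] M) →ₗ[k] E := TensorProduct.lift (LinearMap.mk₂ k
    (fun a m => hh (deltaMap k A a) m)
    (fun a b m => by rw [deltaMap_add, map_add, LinearMap.add_apply])
    (fun c a m => by
      rw [deltaMap_smul, ← algebraMap_smul (A ⊗[k] Aᵐᵒᵖ) c (deltaMap k A a), map_smul,
        algebraMap_smul, LinearMap.smul_apply])
    (fun a m n => by rw [map_add])
    (fun c a m => by rw [map_smul]))
  have S_tmul : ∀ (a : A) (m : M), S (a ⊗ₜ[k] m) = hh (deltaMap k A a) m := fun _ _ => rfl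
  have key1 : ∀ x : A ⊗[k] M,
      ((g (S x) : LinearMap.ker (epsMap k A M)) : A ⊗[k] M)
        = x - (1 : A) ⊗ₜ[k] (epsMap k A M x) := by
    intro x
    induction x using TensorProduct.induction_on with
    | zero => simp
    | tmul b m =>
      rw [S_tmul]
      have h2 := LinearMap.congr_fun hhh (deltaMap k A b)
      rw [LinearMap.comp_apply] at h2
      have h1 : g (hh (deltaMap k A b) m) = ghat (hh (deltaMap k A b)) m := rfl
      rw [h1, h2]
      have h3 : ((thetaMap k A M (deltaMap k A b) m : LinearMap.ker (epsMap k A M)) : A ⊗[k] M)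
          = nuMap k A M (deltaMap k A b).1 m := rfl
      rw [h3]
      show nuMap k A M (b ⊗ₜ[k] (1 : Aᵐᵒᵖ) - (1 : A) ⊗ₜ[k] MulOpposite.op b) m = _
      rw [map_sub, LinearMap.sub_apply, nuMap_tmul, nuMap_tmul, MulOpposite.unop_one,
        MulOpposite.unop_op, one_smul, epsMap_tmul]
    | add u v hu hv =>
      simp only [map_add, Submodule.coe_add, hu, hv, TensorProduct.tmul_add]
      abel
  have key2 : ∀ (a : A) (x : A ⊗[k] M),
      S (a • x) = a • S x + hh (deltaMap k A a) (epsMap k A M x) := by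
    intro a x
    induction x using TensorProduct.induction_on with
    | zero => simp
    | tmul b m =>
      rw [TensorProduct.smul_tmul', smul_eq_mul, S_tmul, S_tmul, deltaMap_mul, map_add,
        LinearMap.add_apply, LinearMap.map_smul, LinearMap.map_smul, homAe_smul_apply,
        homAe_smul_apply, MulOpposite.unop_one, MulOpposite.unop_op, one_smul, one_smul,
        epsMap_tmul]
    | add u v hu hv =>
      simp only [smul_add, map_add, hu, hv]
      abel
  refine ⟨{ toFun := fun κ => S κ.1
            map_add' := fun κ κ' => by rw [Submodule.coe_add, map_add]
            map_smul' := fun a κ => by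
              rw [RingHom.id_apply, Submodule.coe_smul, key2,
                LinearMap.mem_ker.mp κ.2, map_zero, add_zero] }, ?_⟩
  ext κ
  show ((g (S κ.1) : LinearMap.ker (epsMap k A M)) : A ⊗[k] M) = κ.1
  rw [key1, LinearMap.mem_ker.mp κ.2, TensorProduct.tmul_zero, sub_zero]

theorem ker_epsMap_projective
    (hΩ : Module.Projective (A ⊗[k] Aᵐᵒᵖ) (LinearMap.ker (mulMap k A))) :
    Module.Projective A (LinearMap.ker (epsMap k A M)) := by
  apply Module.Projective.of_lifting_property''
  intro f hf
  exact exists_section M hΩ (LinearMap.ker (epsMap k A M) →₀ A) f hf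

end Aux

variable (k A)

theorem hereditary_of_formallySmooth
    (h : Module.Projective (A ⊗[k] Aᵐᵒᵖ) (LinearMap.ker (mulMap k A))) :
    ∀ M : ModuleCat.{0} A, ProjDimLE A M 1 := by
  intro M
  letI : Module k M := Module.compHom M (algebraMap k A)
  haveI : IsScalarTower k A M :=
    ⟨fun c a m => by
      show (c • a) • m = algebraMap k A c • (a • m)
      rw [Algebra.smul_def, mul_smul]⟩
  -- the two-term complex `K → A ⊗ M`
  let P0 : ModuleCat.{0} A := ModuleCat.of A (A ⊗[k] ↑M)
  let P1 : ModuleCat.{0} A := ModuleCat.of A (LinearMap.ker (epsMap k A ↑M))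
  let Z : ModuleCat.{0} A := ModuleCat.of A PUnit
  let d10 : P1 ⟶ P0 := ModuleCat.ofHom (LinearMap.ker (epsMap k A ↑M)).subtype
  let C : ChainComplex (ModuleCat.{0} A) ℕ :=
    ChainComplex.of
      (fun n => match n with | 0 => P0 | 1 => P1 | _+2 => Z)
      (fun n => match n with | 0 => d10 | _+1 => 0)
      (fun n => match n with
        | 0 => Limits.zero_comp
        | _+1 => Limits.zero_comp)
  have hd : C.d 1 0 = d10 := ChainComplex.of_d (fun n => match n with | 0 => P0 | 1 => P1 | _+2 => Z) (fun n => match n with | 0 => d10 | _+1 => 0) 0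
  have hw0 : d10 ≫ (ModuleCat.ofHom (epsMap k A ↑M) : P0 ⟶ M) = 0 := by
    ext x
    exact x.2
  have hw : C.d 1 0 ≫ (ModuleCat.ofHom (epsMap k A ↑M) : P0 ⟶ M) = 0 := by rw [hd]; exact hw0
  refine ⟨{ complex := C
            projective := fun n => ?_
            π := (ChainComplex.toSingle₀Equiv C M).symm ⟨(ModuleCat.ofHom (epsMap k A ↑M) : P0 ⟶ M), hw⟩
            quasiIso := ⟨fun n => ?_⟩ }, fun i hi => ?_⟩
  · -- projectivity of the terms
    match n with
    | 0 =>
      exact ModuleCat.projective_of_free (M := P0) ((Module.Basis.ofVectorSpace k ↑M).baseChange A)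
    | 1 =>
      exact (IsProjective.iff_projective _).mp (ker_epsMap_projective (↑M) h)
    | (n+2) =>
      exact (IsProjective.iff_projective _).mp (inferInstance : Module.Projective A PUnit)
  · -- quasi-isomorphism
    cases n with
    | zero =>
      rw [ChainComplex.quasiIsoAt₀_iff, ShortComplex.quasiIso_iff_of_zeros']
      · have hex : (ShortComplex.mk d10 (ModuleCat.ofHom (epsMap k A ↑M) : P0 ⟶ M) hw0).Exact := by
          rw [ShortComplex.moduleCat_exact_iff]
          intro x hx
          exact ⟨⟨x, hx⟩, rfl⟩
        have hepi : Epi (ShortComplex.mk d10 (ModuleCat.ofHom (epsMap k A ↑M) : P0 ⟶ M) hw0).g := by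
          rw [ModuleCat.epi_iff_surjective]
          exact epsMap_surjective (↑M)
        refine (ShortComplex.exact_and_epi_g_iff_of_iso ?_).2 ⟨hex, hepi⟩
        exact ShortComplex.isoMk (Iso.refl _) (Iso.refl _) (Iso.refl _)
          (by simp [hd, d10]; rfl) (by simp [ChainComplex.toSingle₀Equiv]; rfl)
      all_goals rfl
    | succ n =>
      rw [quasiIsoAt_iff_exactAt']
      · rw [HomologicalComplex.exactAt_iff' _ (n+2) (n+1) n (by simp) (by simp)]
        match n with
        | 0 =>
          rw [ShortComplex.moduleCat_exact_iff]
          intro x hx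
          refine ⟨0, ?_⟩
          rw [map_zero]
          have hx' : ((show ↥(LinearMap.ker (epsMap k A ↑M)) from x) : A ⊗[k] ↑M)
              = ((0 : ↥(LinearMap.ker (epsMap k A ↑M))) : A ⊗[k] ↑M) := by exact hx
          exact (Subtype.ext hx').symm
        | (n+1) =>
          exact ShortComplex.exact_of_isZero_X₂ _ (ModuleCat.isZero_of_subsingleton Z)
      · exact ChainComplex.exactAt_succ_single_obj _ _
  · -- vanishing above degree 1
    match i, hi with
    | (n+2), _ => exact ModuleCat.isZero_of_subsingleton Z

end
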